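/- arXiv:2310.03085 — 4 statements merged into one kernel-verified Lean document; each statement's English description precedes it below -/
import Mathlib

section
/- Under the setup of Lemma consistency2 (D of unit measure, p₁,…,p_P i.i.d. uniform on D, frequencies ω₁,…,ω_m, B_p with entries e^{-i⟨ω_l,p_r⟩}/P), fix a vector ẑ ∈ ℂ^m and bounded densities μ, ν on D. Then E_p ⟨B_p ν(p), B_p μ(p) − ẑ⟩ = ⟨Sν, Sμ − ẑ⟩ + (1/P)·( m·⟨ν, μ⟩_{L²(D)} − ⟨Sν, Sμ⟩ ). -/
open MeasureTheory Complex
noncomputable section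

/-- Standard inner product on `Fin d → ℝ`. -/
def ip {d : ℕ} (w x : Fin d → ℝ) : ℝ := ∑ i, w i * x i

/-- The Fourier-moment sketching operator: `(Sμ)_l = ∫_D e^{-i⟨ω_l,x⟩} μ(x) dx`. -/
def sk {d : ℕ} (m : ℕ) (ω : Fin m → Fin d → ℝ) (D : Set (Fin d → ℝ))
    (μ : (Fin d → ℝ) → ℂ) : Fin m → ℂ :=
  fun l => ∫ x in D, Complex.exp (-Complex.I * (ip (ω l) x : ℂ)) * μ x

/-- The discretized sketch on a grid `p`: `(B_p μ(p))_l = (1/P) ∑_r e^{-i⟨ω_l,p_r⟩} μ(p_r)`. -/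
def dsk {d : ℕ} (m P : ℕ) (ω : Fin m → Fin d → ℝ)
    (μ : (Fin d → ℝ) → ℂ) (p : Fin P → (Fin d → ℝ)) : Fin m → ℂ :=
  fun l => (∑ r : Fin P, Complex.exp (-Complex.I * (ip (ω l) (p r) : ℂ)) * μ (p r)) / (P : ℂ)

/-- The Hermitian inner product on `ℂ^m`. -/
def hinn {m : ℕ} (u v : Fin m → ℂ) : ℂ := ∑ l, u l * (starRingEnd ℂ) (v l)

/-- auxiliary kernel -/
def fker {d : ℕ} (w x : Fin d → ℝ) : ℂ := Complex.exp (-Complex.I * (ip w x : ℂ))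

lemma fker_norm {d : ℕ} (w x : Fin d → ℝ) : ‖fker w x‖ = 1 := by
  simp [fker, Complex.norm_exp]

lemma fker_mul_conj {d : ℕ} (w x : Fin d → ℝ) :
    fker w x * (starRingEnd ℂ) (fker w x) = 1 := by
  rw [Complex.mul_conj]
  norm_cast
  rw [← Complex.sq_norm, fker_norm]; norm_num

lemma fker_measurable {d : ℕ} (w : Fin d → ℝ) : Measurable (fker w) := by
  apply Complex.measurable_exp.comp
  apply Measurable.const_mul
  exact Complex.measurable_ofReal.comp
    (Finset.univ.measurable_sum (fun i _ => (measurable_pi_apply i).const_mul _))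

lemma sk_eq {d m : ℕ} (ω : Fin m → Fin d → ℝ) (D : Set (Fin d → ℝ))
    (μ : (Fin d → ℝ) → ℂ) (l : Fin m) :
    sk m ω D μ l = ∫ x in D, fker (ω l) x * μ x := rfl

lemma dsk_eq {d m P : ℕ} (ω : Fin m → Fin d → ℝ)
    (μ : (Fin d → ℝ) → ℂ) (p : Fin P → (Fin d → ℝ)) (l : Fin m) :
    dsk m P ω μ p l = (∑ r : Fin P, fker (ω l) (p r) * μ (p r)) / (P : ℂ) := rfl

lemma aux_single {α : Type*} [MeasurableSpace α] (μ0 : Measure α) [IsProbabilityMeasure μ0]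
    {P : ℕ} (r : Fin P) (f : α → ℂ) :
    ∫ p : Fin P → α, f (p r) ∂Measure.pi (fun _ => μ0) = ∫ x, f x ∂μ0 := by
  letI : MeasureSpace α := ⟨μ0⟩
  have h := MeasureTheory.integral_fintype_prod_volume_eq_prod (𝕜 := ℂ)
      (fun i x => if i = r then f x else 1)
  have h2 : ∀ i : Fin P, (∫ x : α, if i = r then f x else 1)
      = if i = r then ∫ x, f x ∂μ0 else 1 := by
    intro i
    split_ifs with hi
    · rfl
    · simpa using (by rfl : (volume : Measure α) = μ0) ▸ (integral_const (1:ℂ))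
  simp only [h2, Finset.prod_ite_eq', Finset.mem_univ, if_true] at h
  exact h

lemma aux_pair {α : Type*} [MeasurableSpace α] (μ0 : Measure α) [IsProbabilityMeasure μ0]
    {P : ℕ} {r s : Fin P} (hrs : r ≠ s) (f g : α → ℂ) :
    ∫ p : Fin P → α, f (p r) * g (p s) ∂Measure.pi (fun _ => μ0)
      = (∫ x, f x ∂μ0) * (∫ x, g x ∂μ0) := by
  letI : MeasureSpace α := ⟨μ0⟩
  have h := MeasureTheory.integral_fintype_prod_volume_eq_prod (𝕜 := ℂ)
      (fun i x => (if i = r then f x else 1) * (if i = s then g x else 1))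
  have h2 : ∀ i : Fin P, (∫ x : α, (if i = r then f x else 1) * (if i = s then g x else 1))
      = (if i = r then ∫ x, f x ∂μ0 else 1) * (if i = s then ∫ x, g x ∂μ0 else 1) := by
    intro i
    rcases eq_or_ne i r with hi | hi
    · subst hi
      simp only [if_pos rfl, if_neg hrs]
      simp only [mul_one]
      rfl
    · simp only [if_neg hi]
      rcases eq_or_ne i s with hi2 | hi2
      · subst hi2
        simp only [one_mul]
        rfl
      · simp only [if_neg hi2]
        simpa using (by rfl : (volume : Measure α) = μ0) ▸ (integral_const (1:ℂ))
  simp only [h2, Finset.prod_mul_distrib, Finset.prod_ite_eq', Finset.mem_univ, if_true] at h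
  exact h

/-- The bias computation inside Lemma exp_deriv_naive: for a single random grid,
`E_p ⟨B_p ν(p), B_p μ(p) − ẑ⟩ = ⟨Sν, Sμ − ẑ⟩ + (1/P)(m⟨ν,μ⟩_{L²} − ⟨Sν,Sμ⟩)`. -/
theorem expectation_naive_stochastic_gradient
    (d P m : ℕ) (hP : 0 < P)
    (D : Set (Fin d → ℝ)) (hD : MeasurableSet D) (hD1 : volume D = 1)
    (ω : Fin m → Fin d → ℝ) (z : Fin m → ℂ)
    (μ ν : (Fin d → ℝ) → ℂ) (hmμ : Measurable μ) (hmν : Measurable ν)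
    (M : ℝ) (hbμ : ∀ x ∈ D, ‖μ x‖ ≤ M) (hbν : ∀ x ∈ D, ‖ν x‖ ≤ M) :
    (∫ p : Fin P → (Fin d → ℝ),
        hinn (dsk m P ω ν p) (dsk m P ω μ p - z)
        ∂Measure.pi (fun _ : Fin P => volume.restrict D))
      = hinn (sk m ω D ν) (sk m ω D μ - z)
        + (1 / (P : ℂ)) *
          ((m : ℂ) * (∫ x in D, ν x * (starRingEnd ℂ) (μ x))
            - hinn (sk m ω D ν) (sk m ω D μ)) := by
  haveI : IsProbabilityMeasure (volume.restrict D) :=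
    ⟨by rw [Measure.restrict_apply_univ, hD1]⟩
  set μ0 := (volume : Measure (Fin d → ℝ)).restrict D with hμ0
  set π := Measure.pi (fun _ : Fin P => μ0) with hπdef
  have hP0 : (P : ℂ) ≠ 0 := Nat.cast_ne_zero.mpr hP.ne'
  -- a.e. all coordinates lie in D
  have hAE : ∀ᵐ p ∂π, ∀ r : Fin P, p r ∈ D := by
    have hmeas : MeasurableSet (Set.pi Set.univ (fun _ : Fin P => D)) :=
      MeasurableSet.univ_pi (fun _ => hD)
    have hfull : π (Set.pi Set.univ fun _ => D) = 1 := by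
      rw [hπdef, Measure.pi_pi]
      simp [hμ0, Measure.restrict_apply_self, hD1]
    have hcompl : π (Set.pi Set.univ fun _ => D)ᶜ = 0 := by
      rw [measure_compl hmeas (by simp [hfull])]
      simp [hfull]
    refine ae_iff.2 ?_
    convert hcompl using 2
    ext p
    simp [Set.mem_pi]
  -- integrability helpers
  have key_int1 : ∀ (φ : (Fin d → ℝ) → ℂ), Measurable φ → (∀ x ∈ D, ‖φ x‖ ≤ M) →
      ∀ r : Fin P, Integrable (fun p : Fin P → (Fin d → ℝ) => φ (p r)) π := by
    intro φ hφ hb r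
    refine Integrable.mono' (integrable_const M)
      ((hφ.comp (measurable_pi_apply r)).aestronglyMeasurable) ?_
    filter_upwards [hAE] with p hp
    exact hb (p r) (hp r)
  have key_int2 : ∀ (φ ψ : (Fin d → ℝ) → ℂ), Measurable φ → Measurable ψ →
      (∀ x ∈ D, ‖φ x‖ ≤ M) → (∀ x ∈ D, ‖ψ x‖ ≤ M) →
      ∀ r s : Fin P,
        Integrable (fun p : Fin P → (Fin d → ℝ) => φ (p r) * (starRingEnd ℂ) (ψ (p s))) π := by
    intro φ ψ hφ hψ hbφ hbψ r s
    refine Integrable.mono' (integrable_const (M * M))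
      (((hφ.comp (measurable_pi_apply r)).mul
        (Complex.continuous_conj.measurable.comp (hψ.comp (measurable_pi_apply s)))).aestronglyMeasurable) ?_
    filter_upwards [hAE] with p hp
    rw [norm_mul, RCLike.norm_conj]
    exact mul_le_mul (hbφ (p r) (hp r)) (hbψ (p s) (hp s)) (norm_nonneg _)
      ((norm_nonneg _).trans (hbφ (p r) (hp r)))
  -- the integrand functions
  set F : Fin m → (Fin d → ℝ) → ℂ := fun l x => fker (ω l) x * ν x with hF
  set G : Fin m → (Fin d → ℝ) → ℂ := fun l x => fker (ω l) x * μ x with hG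
  have hmF : ∀ l, Measurable (F l) := fun l => (fker_measurable _).mul hmν
  have hmG : ∀ l, Measurable (G l) := fun l => (fker_measurable _).mul hmμ
  have hbF : ∀ l, ∀ x ∈ D, ‖F l x‖ ≤ M := by
    intro l x hx; rw [hF]; simp only [norm_mul, fker_norm, one_mul]; exact hbν x hx
  have hbG : ∀ l, ∀ x ∈ D, ‖G l x‖ ≤ M := by
    intro l x hx; rw [hG]; simp only [norm_mul, fker_norm, one_mul]; exact hbμ x hx
  -- named constants
  set J : ℂ := ∫ x in D, ν x * (starRingEnd ℂ) (μ x) with hJ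
  -- integrability of all pieces
  have hIpair : ∀ (l : Fin m) (r s : Fin P),
      Integrable (fun p : Fin P → (Fin d → ℝ) => F l (p r) * (starRingEnd ℂ) (G l (p s))) π :=
    fun l r s => key_int2 (F l) (G l) (hmF l) (hmG l) (hbF l) (hbG l) r s
  have hIsum2 : ∀ l : Fin m,
      Integrable (fun p : Fin P → (Fin d → ℝ) =>
        ∑ r : Fin P, ∑ s : Fin P, F l (p r) * (starRingEnd ℂ) (G l (p s))) π :=
    fun l => integrable_finset_sum _ (fun r _ =>
      integrable_finset_sum _ (fun s _ => hIpair l r s))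
  have hIsingle : ∀ (l : Fin m) (r : Fin P),
      Integrable (fun p : Fin P → (Fin d → ℝ) => F l (p r)) π :=
    fun l r => key_int1 (F l) (hmF l) (hbF l) r
  have hIsum1 : ∀ l : Fin m,
      Integrable (fun p : Fin P → (Fin d → ℝ) => ∑ r : Fin P, F l (p r)) π :=
    fun l => integrable_finset_sum _ (fun r _ => hIsingle l r)
  -- rewrite the integrand
  have hrw : ∀ p : Fin P → (Fin d → ℝ),
      hinn (dsk m P ω ν p) (dsk m P ω μ p - z)
        = ∑ l, ((1/(P:ℂ))^2 * ∑ r : Fin P, ∑ s : Fin P, F l (p r) * (starRingEnd ℂ) (G l (p s))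
            - (1/(P:ℂ)) * ((starRingEnd ℂ) (z l) * ∑ r : Fin P, F l (p r))) := by
    intro p
    unfold hinn
    refine Finset.sum_congr rfl fun l _ => ?_
    rw [Pi.sub_apply, dsk_eq, dsk_eq, map_sub, map_div₀, map_natCast, map_sum]
    simp only [hF, hG]
    rw [← Finset.sum_mul_sum (Finset.univ : Finset (Fin P)) (Finset.univ : Finset (Fin P))
      (fun r => fker (ω l) (p r) * ν (p r)) (fun s => (starRingEnd ℂ) (fker (ω l) (p s) * μ (p s)))]
    field_simp
  rw [integral_congr_ae (Filter.Eventually.of_forall hrw)]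
  -- pull sums out of the integral
  have hsum : (∫ p, ∑ l, ((1/(P:ℂ))^2 * ∑ r : Fin P, ∑ s : Fin P, F l (p r) * (starRingEnd ℂ) (G l (p s))
            - (1/(P:ℂ)) * ((starRingEnd ℂ) (z l) * ∑ r : Fin P, F l (p r))) ∂π)
      = ∑ l, ∫ p, ((1/(P:ℂ))^2 * ∑ r : Fin P, ∑ s : Fin P, F l (p r) * (starRingEnd ℂ) (G l (p s))
            - (1/(P:ℂ)) * ((starRingEnd ℂ) (z l) * ∑ r : Fin P, F l (p r))) ∂π :=
    integral_finset_sum _ (fun l _ =>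
      ((hIsum2 l).const_mul _).sub (((hIsum1 l).const_mul _).const_mul _))
  rw [hsum]
  -- compute each term
  have hpairval : ∀ (l : Fin m) (r s : Fin P),
      (∫ p, F l (p r) * (starRingEnd ℂ) (G l (p s)) ∂π)
        = if r = s then J else sk m ω D ν l * (starRingEnd ℂ) (sk m ω D μ l) := by
    intro l r s
    rcases eq_or_ne r s with h | h
    · subst h
      rw [if_pos rfl]
      have := aux_single μ0 r (fun x => F l x * (starRingEnd ℂ) (G l x))
      rw [this]
      rw [hJ]
      refine integral_congr_ae (Filter.Eventually.of_forall fun x => ?_)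
      rw [hF, hG]
      simp only [map_mul]
      have h1 := fker_mul_conj (ω l) x
      calc fker (ω l) x * ν x * ((starRingEnd ℂ) (fker (ω l) x) * (starRingEnd ℂ) (μ x))
          = (fker (ω l) x * (starRingEnd ℂ) (fker (ω l) x)) * (ν x * (starRingEnd ℂ) (μ x)) := by
            ring
        _ = ν x * (starRingEnd ℂ) (μ x) := by rw [h1, one_mul]
    · rw [if_neg h]
      have := aux_pair μ0 h (F l) (fun x => (starRingEnd ℂ) (G l x))
      rw [this, integral_conj]
      rfl
  have htermval : ∀ l : Fin m,
      (∫ p, ((1/(P:ℂ))^2 * ∑ r : Fin P, ∑ s : Fin P, F l (p r) * (starRingEnd ℂ) (G l (p s))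
          - (1/(P:ℂ)) * ((starRingEnd ℂ) (z l) * ∑ r : Fin P, F l (p r))) ∂π)
        = (1/(P:ℂ))^2 * ((P:ℂ) * ((P:ℂ) * (sk m ω D ν l * (starRingEnd ℂ) (sk m ω D μ l))
              + (J - sk m ω D ν l * (starRingEnd ℂ) (sk m ω D μ l))))
          - (1/(P:ℂ)) * ((starRingEnd ℂ) (z l) * ((P:ℂ) * sk m ω D ν l)) := by
    intro l
    rw [integral_sub ((hIsum2 l).const_mul _) (((hIsum1 l).const_mul _).const_mul _),
      integral_const_mul, integral_const_mul, integral_const_mul,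
      integral_finset_sum _ (fun r _ => integrable_finset_sum _ (fun s _ => hIpair l r s)),
      integral_finset_sum _ (fun r _ => hIsingle l r)]
    congr 2
    · -- double sum
      have : ∀ r : Fin P,
          (∑ s : Fin P, ∫ p, F l (p r) * (starRingEnd ℂ) (G l (p s)) ∂π)
            = (P:ℂ) * (sk m ω D ν l * (starRingEnd ℂ) (sk m ω D μ l))
              + (J - sk m ω D ν l * (starRingEnd ℂ) (sk m ω D μ l)) := by
        intro r
        rw [Finset.sum_congr rfl (fun s _ => hpairval l r s)]
        set K := sk m ω D ν l * (starRingEnd ℂ) (sk m ω D μ l) with hK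
        rw [Finset.sum_congr rfl (fun s _ =>
          (show (if r = s then J else K) = K + (if r = s then J - K else 0) by
            split_ifs <;> ring))]
        rw [Finset.sum_add_distrib, Finset.sum_const, Finset.sum_ite_eq]
        simp [Finset.card_univ, nsmul_eq_mul]
      rw [Finset.sum_congr rfl (fun r _ =>
        show (∫ p, ∑ s : Fin P, F l (p r) * (starRingEnd ℂ) (G l (p s)) ∂π)
            = (P:ℂ) * (sk m ω D ν l * (starRingEnd ℂ) (sk m ω D μ l))
              + (J - sk m ω D ν l * (starRingEnd ℂ) (sk m ω D μ l)) from by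
          rw [integral_finset_sum _ (fun s _ => hIpair l r s)]; exact this r)]
      rw [Finset.sum_const]
      simp only [Finset.card_univ, Fintype.card_fin, nsmul_eq_mul]
    · -- single sum
      congr 1
      rw [Finset.sum_congr rfl (fun r _ => aux_single μ0 r (F l))]
      rw [Finset.sum_const]
      simp only [Finset.card_univ, Fintype.card_fin, nsmul_eq_mul]
      rfl
  rw [Finset.sum_congr rfl (fun l _ => htermval l)]
  -- final algebra
  calc (∑ l, ((1/(P:ℂ))^2 * ((P:ℂ) * ((P:ℂ) * (sk m ω D ν l * (starRingEnd ℂ) (sk m ω D μ l))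
              + (J - sk m ω D ν l * (starRingEnd ℂ) (sk m ω D μ l))))
          - (1/(P:ℂ)) * ((starRingEnd ℂ) (z l) * ((P:ℂ) * sk m ω D ν l))))
      = ∑ l, (sk m ω D ν l * (starRingEnd ℂ) ((sk m ω D μ - z) l)
          + (1/(P:ℂ)) * (J - sk m ω D ν l * (starRingEnd ℂ) (sk m ω D μ l))) := by
        refine Finset.sum_congr rfl fun l _ => ?_
        simp only [Pi.sub_apply, map_sub]
        field_simp
        ring
    _ = hinn (sk m ω D ν) (sk m ω D μ - z)
        + (1 / (P : ℂ)) * ((m : ℂ) * J - hinn (sk m ω D ν) (sk m ω D μ)) := by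
        rw [Finset.sum_add_distrib]
        congr 1
        rw [← Finset.mul_sum]
        congr 1
        rw [Finset.sum_sub_distrib]
        congr 1
        simp [Finset.sum_const, Finset.card_univ]
end
end

section
/- Let p = (p₁,…,p_P) and q = (q₁,…,q_P) be two independent families, each i.i.d. uniform on a domain D of unit measure, and let B_p, B_q be the corresponding random sketch matrices with entries e^{-i⟨ω_l,p_r⟩}/P and e^{-i⟨ω_l,q_r⟩}/P. Fix ẑ ∈ ℂ^m and bounded measurable densities μ, ν on D. Then E_{p,q} ⟨B_p ν(p), B_q μ(q) − ẑ⟩ = ⟨Sν, Sμ − ẑ⟩ exactly, with no bias term. -/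
open MeasureTheory Complex
noncomputable section

lemma pi_map_eval' {ι : Type*} [Fintype ι] {α : ι → Type*} [∀ i, MeasurableSpace (α i)]
    (μ : ∀ i, Measure (α i)) [∀ i, IsProbabilityMeasure (μ i)] (i : ι) :
    (Measure.pi μ).map (Function.eval i) = μ i := by
  classical
  ext s hs
  rw [Measure.map_apply (measurable_pi_apply i) hs, Set.eval_preimage, Measure.pi_pi]
  rw [Finset.prod_eq_single i]
  · simp
  · intro j _ hj; simp [Function.update_of_ne hj]
  · simp

lemma expl_meas {d m : ℕ} (ω : Fin m → Fin d → ℝ) (l : Fin m) :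
    Measurable fun x : Fin d → ℝ => Complex.exp (-Complex.I * (ip (ω l) x : ℂ)) := by
  apply Complex.measurable_exp.comp
  apply Measurable.const_mul
  exact Complex.measurable_ofReal.comp (by unfold ip; fun_prop)

lemma expl_norm {d m : ℕ} (ω : Fin m → Fin d → ℝ) (l : Fin m) (x : Fin d → ℝ) :
    ‖Complex.exp (-Complex.I * (ip (ω l) x : ℂ))‖ = 1 := by
  rw [Complex.norm_exp]
  simp

lemma rho_prob {d : ℕ} (D : Set (Fin d → ℝ)) (hD1 : volume D = 1) :
    IsProbabilityMeasure (volume.restrict D) := by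
  constructor
  rw [Measure.restrict_apply_univ]; exact hD1

lemma ae_mem {d : ℕ} (P : ℕ) (D : Set (Fin d → ℝ)) (hD : MeasurableSet D) (r : Fin P) :
    ∀ᵐ p : Fin P → (Fin d → ℝ) ∂(Measure.pi fun _ : Fin P => volume.restrict D),
      p r ∈ D := by
  have h0 : (volume.restrict D) Dᶜ = 0 := by
    rw [Measure.restrict_apply hD.compl]; simp
  have h := Measure.pi_eval_preimage_null (μ := fun _ : Fin P => volume.restrict D)
    (i := r) h0
  filter_upwards [measure_eq_zero_iff_ae_notMem.mp h] with p hp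
  simpa using hp

lemma term_integrable {d m : ℕ} (P : ℕ) (D : Set (Fin d → ℝ)) (hD : MeasurableSet D)
    (hD1 : volume D = 1) (ω : Fin m → Fin d → ℝ) (f : (Fin d → ℝ) → ℂ) (hmf : Measurable f)
    (M : ℝ) (hbf : ∀ x ∈ D, ‖f x‖ ≤ M) (l : Fin m) (r : Fin P) :
    Integrable (fun p : Fin P → (Fin d → ℝ) =>
        Complex.exp (-Complex.I * (ip (ω l) (p r) : ℂ)) * f (p r))
      (Measure.pi fun _ : Fin P => volume.restrict D) := by
  haveI : IsProbabilityMeasure (volume.restrict D) := rho_prob D hD1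
  have hmeas : Measurable (fun p : Fin P → (Fin d → ℝ) =>
      Complex.exp (-Complex.I * (ip (ω l) (p r) : ℂ)) * f (p r)) :=
    ((expl_meas ω l).comp (measurable_pi_apply r)).mul (hmf.comp (measurable_pi_apply r))
  refine (integrable_const M).mono' hmeas.aestronglyMeasurable ?_
  filter_upwards [ae_mem P D hD r] with p hp
  rw [norm_mul, expl_norm, one_mul]
  exact hbf _ hp

lemma dsk_integrable {d m : ℕ} (P : ℕ) (D : Set (Fin d → ℝ)) (hD : MeasurableSet D)
    (hD1 : volume D = 1) (ω : Fin m → Fin d → ℝ) (f : (Fin d → ℝ) → ℂ) (hmf : Measurable f)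
    (M : ℝ) (hbf : ∀ x ∈ D, ‖f x‖ ≤ M) (l : Fin m) :
    Integrable (fun p : Fin P → (Fin d → ℝ) => dsk m P ω f p l)
      (Measure.pi fun _ : Fin P => volume.restrict D) := by
  unfold dsk
  exact (integrable_finset_sum _ fun r _ =>
    term_integrable P D hD hD1 ω f hmf M hbf l r).div_const _

lemma dsk_expectation {d m : ℕ} (P : ℕ) (hP : 0 < P) (D : Set (Fin d → ℝ))
    (hD : MeasurableSet D) (hD1 : volume D = 1) (ω : Fin m → Fin d → ℝ)
    (f : (Fin d → ℝ) → ℂ) (hmf : Measurable f)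
    (M : ℝ) (hbf : ∀ x ∈ D, ‖f x‖ ≤ M) (l : Fin m) :
    ∫ p, dsk m P ω f p l ∂(Measure.pi fun _ : Fin P => volume.restrict D)
      = sk m ω D f l := by
  haveI : IsProbabilityMeasure (volume.restrict D) := rho_prob D hD1
  unfold dsk
  rw [integral_div, integral_finset_sum _ fun r _ =>
    term_integrable P D hD hD1 ω f hmf M hbf l r]
  have hterm : ∀ r : Fin P,
      ∫ p : Fin P → (Fin d → ℝ), Complex.exp (-Complex.I * (ip (ω l) (p r) : ℂ)) * f (p r)
        ∂(Measure.pi fun _ : Fin P => volume.restrict D) = sk m ω D f l := by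
    intro r
    have hmap := pi_map_eval' (fun _ : Fin P => volume.restrict D) r
    have hcomp : ∫ x, Complex.exp (-Complex.I * (ip (ω l) x : ℂ)) * f x
        ∂((Measure.pi fun _ : Fin P => volume.restrict D).map (Function.eval r))
        = ∫ p : Fin P → (Fin d → ℝ),
            Complex.exp (-Complex.I * (ip (ω l) (p r) : ℂ)) * f (p r)
            ∂(Measure.pi fun _ : Fin P => volume.restrict D) := by
      rw [integral_map (measurable_pi_apply r).aemeasurable
        (((expl_meas ω l).mul hmf).aestronglyMeasurable)]
    rw [← hcomp, hmap]
    rfl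
  simp_rw [hterm]
  rw [Finset.sum_const, Finset.card_univ, Fintype.card_fin]
  have hPc : (P : ℂ) ≠ 0 := Nat.cast_ne_zero.mpr hP.ne'
  rw [nsmul_eq_mul]
  field_simp

/-- Lemma partial_meth2: with two independent i.i.d.-uniform grids `p`, `q`,
`E_{p,q} ⟨B_p ν(p), B_q μ(q) − ẑ⟩ = ⟨Sν, Sμ − ẑ⟩` exactly (no bias). -/
theorem expectation_two_grid_stochastic_gradient
    (d P m : ℕ) (hP : 0 < P)
    (D : Set (Fin d → ℝ)) (hD : MeasurableSet D) (hD1 : volume D = 1)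
    (ω : Fin m → Fin d → ℝ) (z : Fin m → ℂ)
    (μ ν : (Fin d → ℝ) → ℂ) (hmμ : Measurable μ) (hmν : Measurable ν)
    (M : ℝ) (hbμ : ∀ x ∈ D, ‖μ x‖ ≤ M) (hbν : ∀ x ∈ D, ‖ν x‖ ≤ M) :
    (∫ pq : (Fin P → (Fin d → ℝ)) × (Fin P → (Fin d → ℝ)),
        hinn (dsk m P ω ν pq.1) (dsk m P ω μ pq.2 - z)
        ∂(Measure.prod
            (Measure.pi fun _ : Fin P => volume.restrict D)
            (Measure.pi fun _ : Fin P => volume.restrict D)))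
      = hinn (sk m ω D ν) (sk m ω D μ - z) := by
  haveI : IsProbabilityMeasure (volume.restrict D) := rho_prob D hD1
  have hiν : ∀ l, Integrable (fun p : Fin P → (Fin d → ℝ) => dsk m P ω ν p l)
      (Measure.pi fun _ : Fin P => volume.restrict D) :=
    fun l => dsk_integrable P D hD hD1 ω ν hmν M hbν l
  have hiμ : ∀ l, Integrable
      (fun q : Fin P → (Fin d → ℝ) => (starRingEnd ℂ) (dsk m P ω μ q l - z l))
      (Measure.pi fun _ : Fin P => volume.restrict D) := by
    intro l
    exact Complex.conjCLE.toContinuousLinearMap.integrable_comp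
      ((dsk_integrable P D hD hD1 ω μ hmμ M hbμ l).sub (integrable_const (z l)))
  unfold hinn
  rw [integral_finset_sum]
  · refine Finset.sum_congr rfl fun l _ => ?_
    have hre : (fun pq : (Fin P → (Fin d → ℝ)) × (Fin P → (Fin d → ℝ)) =>
        dsk m P ω ν pq.1 l * (starRingEnd ℂ) ((dsk m P ω μ pq.2 - z) l))
        = fun pq => (fun p => dsk m P ω ν p l) pq.1 *
            (fun q => (starRingEnd ℂ) (dsk m P ω μ q l - z l)) pq.2 := rfl
    rw [hre, integral_prod_mul (fun p => dsk m P ω ν p l)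
      (fun q => (starRingEnd ℂ) (dsk m P ω μ q l - z l))]
    congr 1
    · exact dsk_expectation P hP D hD hD1 ω ν hmν M hbν l
    · rw [integral_conj]
      congr 1
      rw [integral_sub (dsk_integrable P D hD hD1 ω μ hmμ M hbμ l) (integrable_const (z l)),
        dsk_expectation P hP D hD hD1 ω μ hmμ M hbμ l, integral_const]
      simp [Pi.sub_apply]
  · intro l _
    exact (hiν l).mul_prod (hiμ l)
end
end

section
/- Combining Lemma partial_meth2 over the canonical basis: with p, q independent i.i.d.-uniform grids on D (unit measure) and D_{p,q} ∈ ℝ^{d₀} the vector with i-th component 2·Re⟨B_p ∂_{e_i} μ_θ(p), B_q μ_θ(q) − ẑ⟩, and assuming the directional derivative formula ∂_h G(θ) = 2·Re⟨S ∂_h μ_θ, S μ_θ − ẑ⟩ holds for G(θ) = ‖Sμ_θ − ẑ‖², one has E_{p,q}[D_{p,q}] = ∇G(θ). -/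
open MeasureTheory Complex
noncomputable section

section aux

lemma ip_continuous {d : ℕ} (w : Fin d → ℝ) : Continuous (fun x => ip w x) := by
  unfold ip
  exact continuous_finset_sum _ fun i _ => continuous_const.mul (continuous_apply i)

lemma exp_term_measurable {d : ℕ} (w : Fin d → ℝ) (f : (Fin d → ℝ) → ℂ) (hf : Measurable f) :
    Measurable (fun x => Complex.exp (-Complex.I * (ip w x : ℂ)) * f x) := by
  refine Measurable.mul ?_ hf
  exact (Complex.continuous_exp.comp
    (continuous_const.mul (Complex.continuous_ofReal.comp (ip_continuous w)))).measurable

lemma exp_term_norm {d : ℕ} (w : Fin d → ℝ) (f : (Fin d → ℝ) → ℂ) (x : Fin d → ℝ) :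
    ‖Complex.exp (-Complex.I * (ip w x : ℂ)) * f x‖ = ‖f x‖ := by
  rw [norm_mul]
  have : ‖Complex.exp (-Complex.I * (ip w x : ℂ))‖ = 1 := by
    rw [Complex.norm_exp]
    simp
  rw [this, one_mul]

/-- The pushforward of the product of `P` copies of a probability measure under a
coordinate evaluation is that probability measure. -/
lemma pi_map_eval {α : Type*} [MeasurableSpace α] (ν : Measure α) [IsProbabilityMeasure ν]
    (P : ℕ) (r : Fin P) :
    (Measure.pi fun _ : Fin P => ν).map (fun p => p r) = ν := by
  ext s hs
  rw [Measure.map_apply (measurable_pi_apply r) hs]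
  have h : (fun p : Fin P → α => p r) ⁻¹' s
      = Set.pi Set.univ (Function.update (fun _ => Set.univ) r s) := by
    ext p
    simp only [Set.mem_preimage, Set.mem_pi, Set.mem_univ, true_implies]
    constructor
    · intro hp j
      rcases eq_or_ne j r with rfl | hj
      · simpa using hp
      · simp [Function.update_apply, hj]
    · intro hp
      have := hp r
      simpa using this
  rw [h, Measure.pi_pi]
  rw [Finset.prod_eq_single r]
  · simp
  · intro j _ hj; simp [Function.update_apply, hj]
  · simp

lemma eval_integrable {α : Type*} [MeasurableSpace α] (ν : Measure α) [IsProbabilityMeasure ν]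
    (P : ℕ) (r : Fin P) (g : α → ℂ) (hg : Integrable g ν) :
    Integrable (fun p : Fin P → α => g (p r)) (Measure.pi fun _ : Fin P => ν) := by
  have h := pi_map_eval ν P r
  rw [show (fun p : Fin P → α => g (p r)) = g ∘ (fun p => p r) from rfl]
  refine (integrable_map_measure ?_ (measurable_pi_apply r).aemeasurable).mp ?_
  · rw [h]; exact hg.aestronglyMeasurable
  · rw [h]; exact hg

lemma eval_integral {α : Type*} [MeasurableSpace α] (ν : Measure α) [IsProbabilityMeasure ν]
    (P : ℕ) (r : Fin P) (g : α → ℂ) (hg : AEStronglyMeasurable g ν) :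
    ∫ p, g (p r) ∂(Measure.pi fun _ : Fin P => ν) = ∫ x, g x ∂ν := by
  have h := pi_map_eval ν P r
  rw [show (∫ p, g (p r) ∂(Measure.pi fun _ : Fin P => ν))
      = ∫ p, g ((fun p : Fin P → α => p r) p) ∂(Measure.pi fun _ : Fin P => ν) from rfl,
    ← integral_map (measurable_pi_apply r).aemeasurable (by rw [h]; exact hg), h]

/-- Key facts about the discretized sketch: integrability and expectation. -/
lemma dsk_facts {d : ℕ} (m P : ℕ) (hP : 0 < P) (ω : Fin m → Fin d → ℝ)
    (D : Set (Fin d → ℝ)) (hD : MeasurableSet D)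
    (hprob : IsProbabilityMeasure (volume.restrict D))
    (f : (Fin d → ℝ) → ℂ) (hf : Measurable f) (M : ℝ) (hb : ∀ x ∈ D, ‖f x‖ ≤ M) (l : Fin m) :
    Integrable (fun p : Fin P → (Fin d → ℝ) => dsk m P ω f p l)
        (Measure.pi fun _ : Fin P => volume.restrict D) ∧
    ∫ p, dsk m P ω f p l ∂(Measure.pi fun _ : Fin P => volume.restrict D) = sk m ω D f l := by
  set ν := volume.restrict D with hν
  set e : (Fin d → ℝ) → ℂ := fun x => Complex.exp (-Complex.I * (ip (ω l) x : ℂ)) * f x with he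
  have hem : Measurable e := exp_term_measurable (ω l) f hf
  have heint : Integrable e ν := by
    refine Integrable.mono' (integrable_const M) hem.aestronglyMeasurable ?_
    filter_upwards [ae_restrict_mem hD] with x hx
    rw [he]; rw [exp_term_norm]; exact hb x hx
  have hterm : ∀ r : Fin P, Integrable (fun p : Fin P → (Fin d → ℝ) => e (p r))
      (Measure.pi fun _ : Fin P => ν) := fun r => eval_integrable ν P r e heint
  have hsum : Integrable (fun p : Fin P → (Fin d → ℝ) => ∑ r : Fin P, e (p r))
      (Measure.pi fun _ : Fin P => ν) := integrable_finset_sum _ fun r _ => hterm r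
  constructor
  · have := hsum.div_const (P : ℂ)
    convert this using 1
    rfl
  · have h1 : (∫ p, dsk m P ω f p l ∂(Measure.pi fun _ : Fin P => ν))
        = (∫ p, ∑ r : Fin P, e (p r) ∂(Measure.pi fun _ : Fin P => ν)) / (P : ℂ) := by
      simp only [dsk, he]
      rw [integral_div]
    rw [h1, integral_finset_sum _ fun r _ => hterm r]
    have h2 : ∀ r : Fin P, (∫ p, e (p r) ∂(Measure.pi fun _ : Fin P => ν)) = ∫ x, e x ∂ν :=
      fun r => eval_integral ν P r e heint.aestronglyMeasurable
    simp only [h2, Finset.sum_const, Finset.card_univ, Fintype.card_fin, nsmul_eq_mul]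
    have hPne : (P : ℂ) ≠ 0 := Nat.cast_ne_zero.mpr hP.ne'
    rw [mul_comm, mul_div_assoc, div_self hPne, mul_one]
    rfl

end aux

/-- Lemma gradient_meth2: the two-grid stochastic direction `D_{p,q}` is, in
expectation, exactly the gradient of the sketch matching objective
`G(θ) = ‖Sμ_θ − ẑ‖²` (componentwise, i.e. each component of `E D_{p,q}` is the
corresponding partial derivative of `G` at `θ`). -/
theorem expectation_two_grid_direction_is_gradient
    (d m d0 P : ℕ) (hP : 0 < P)
    (D : Set (Fin d → ℝ)) (hD : MeasurableSet D) (hD1 : volume D = 1)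
    (ω : Fin m → Fin d → ℝ) (z : Fin m → ℂ)
    (μ : (Fin d0 → ℝ) → (Fin d → ℝ) → ℂ) (θ : Fin d0 → ℝ)
    (dμ : Fin d0 → (Fin d → ℝ) → ℂ)
    (hmθ : Measurable (μ θ)) (hmd : ∀ i, Measurable (dμ i))
    (M : ℝ) (hbθ : ∀ x ∈ D, ‖μ θ x‖ ≤ M) (hbd : ∀ i, ∀ x ∈ D, ‖dμ i x‖ ≤ M)
    (G : (Fin d0 → ℝ) → ℝ)
    (hGdef : ∀ θ', G θ' = ∑ l, Complex.normSq (sk m ω D (μ θ') l - z l))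
    -- the directional derivative formula for G along each canonical direction
    (hG : ∀ i : Fin d0,
      HasDerivAt (fun t : ℝ => G (θ + t • (Pi.single i (1:ℝ) : Fin d0 → ℝ)))
        (2 * (hinn (sk m ω D (dμ i)) (sk m ω D (μ θ) - z)).re) 0) :
    ∀ i : Fin d0,
      HasDerivAt (fun t : ℝ => G (θ + t • (Pi.single i (1:ℝ) : Fin d0 → ℝ)))
        (∫ pq : (Fin P → (Fin d → ℝ)) × (Fin P → (Fin d → ℝ)),
            2 * (hinn (dsk m P ω (dμ i) pq.1) (dsk m P ω (μ θ) pq.2 - z)).re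
          ∂(Measure.prod
              (Measure.pi fun _ : Fin P => volume.restrict D)
              (Measure.pi fun _ : Fin P => volume.restrict D))) 0 := by
  intro i
  set ν := volume.restrict D with hνdef
  haveI hprob : IsProbabilityMeasure ν := by
    constructor
    rw [hνdef, Measure.restrict_apply_univ]
    exact hD1
  set π := (Measure.pi fun _ : Fin P => ν) with hπdef
  haveI : IsProbabilityMeasure π := by rw [hπdef]; infer_instance
  -- facts about the discretized sketches
  have hA := fun l => dsk_facts m P hP ω D hD hprob (dμ i) (hmd i) M (hbd i) l
  have hB := fun l => dsk_facts m P hP ω D hD hprob (μ θ) hmθ M hbθ l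
  -- components
  set A : (Fin P → (Fin d → ℝ)) → Fin m → ℂ := fun p => dsk m P ω (dμ i) p with hAdef
  set B : (Fin P → (Fin d → ℝ)) → Fin m → ℂ := fun q l => dsk m P ω (μ θ) q l - z l with hBdef
  have hBint : ∀ l, Integrable (fun q => B q l) π := fun l =>
    ((hB l).1.sub (integrable_const (z l)))
  have hBconjint : ∀ l, Integrable (fun q => (starRingEnd ℂ) (B q l)) π := by
    intro l
    refine Integrable.mono' (hBint l).norm ?_ ?_
    · exact (Complex.continuous_conj.comp_aestronglyMeasurable (hBint l).aestronglyMeasurable)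
    · filter_upwards with q
      simp
  have hBintegral : ∀ l, ∫ q, B q l ∂π = sk m ω D (μ θ) l - z l := by
    intro l
    rw [hBdef]
    rw [integral_sub (hB l).1 (integrable_const (z l)), (hB l).2, integral_const]
    simp
  -- integrability of each product summand on the product measure
  have hprodint : ∀ l : Fin m,
      Integrable (fun pq : (Fin P → (Fin d → ℝ)) × (Fin P → (Fin d → ℝ)) =>
        A pq.1 l * (starRingEnd ℂ) (B pq.2 l)) (π.prod π) := fun l =>
    ((hA l).1.mul_prod (hBconjint l))
  -- compute the expectation
  have key : (∫ pq : (Fin P → (Fin d → ℝ)) × (Fin P → (Fin d → ℝ)),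
        2 * (hinn (dsk m P ω (dμ i) pq.1) (dsk m P ω (μ θ) pq.2 - z)).re ∂(π.prod π))
      = 2 * (hinn (sk m ω D (dμ i)) (sk m ω D (μ θ) - z)).re := by
    have hpt : ∀ pq : (Fin P → (Fin d → ℝ)) × (Fin P → (Fin d → ℝ)),
        2 * (hinn (dsk m P ω (dμ i) pq.1) (dsk m P ω (μ θ) pq.2 - z)).re
        = ∑ l : Fin m, 2 * (A pq.1 l * (starRingEnd ℂ) (B pq.2 l)).re := by
      intro pq
      rw [hinn, Complex.re_sum, Finset.mul_sum]
      rfl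
    simp_rw [hpt]
    have hint : ∀ l ∈ (Finset.univ : Finset (Fin m)),
        Integrable (fun pq : (Fin P → (Fin d → ℝ)) × (Fin P → (Fin d → ℝ)) =>
          2 * (A pq.1 l * (starRingEnd ℂ) (B pq.2 l)).re) (π.prod π) :=
      fun l _ => (hprodint l).re.const_mul 2
    rw [integral_finset_sum _ hint]
    have hterm : ∀ l : Fin m,
        (∫ pq : (Fin P → (Fin d → ℝ)) × (Fin P → (Fin d → ℝ)),
          2 * (A pq.1 l * (starRingEnd ℂ) (B pq.2 l)).re ∂(π.prod π))
        = 2 * ((sk m ω D (dμ i) l) * (starRingEnd ℂ) (sk m ω D (μ θ) l - z l)).re := by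
      intro l
      rw [show (∫ pq : (Fin P → (Fin d → ℝ)) × (Fin P → (Fin d → ℝ)),
            2 * (A pq.1 l * (starRingEnd ℂ) (B pq.2 l)).re ∂(π.prod π))
          = 2 * ∫ pq : (Fin P → (Fin d → ℝ)) × (Fin P → (Fin d → ℝ)),
            (A pq.1 l * (starRingEnd ℂ) (B pq.2 l)).re ∂(π.prod π) from
        integral_const_mul 2 _]
      have h3 : (∫ pq : (Fin P → (Fin d → ℝ)) × (Fin P → (Fin d → ℝ)),
            (A pq.1 l * (starRingEnd ℂ) (B pq.2 l)).re ∂(π.prod π))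
          = (∫ pq : (Fin P → (Fin d → ℝ)) × (Fin P → (Fin d → ℝ)),
            A pq.1 l * (starRingEnd ℂ) (B pq.2 l) ∂(π.prod π)).re := integral_re (hprodint l)
      rw [h3]
      rw [integral_prod_mul (fun p => A p l) (fun q => (starRingEnd ℂ) (B q l))]
      rw [integral_conj, hBintegral l, (hA l).2]
    simp_rw [hterm]
    rw [hinn, Complex.re_sum, Finset.mul_sum]
    rfl
  rw [key]
  exact hG i
end
end

section
/- Let p = (p₁,…,p_P) and q = (q₁,…,q_P) be independent families, each i.i.d. uniform on a domain D of unit measure, B_p, B_q the corresponding discretized sketching matrices with m fixed frequencies, and μ₁, μ₂ bounded densities on D. Then E_{p,q} |⟨B_p μ₁(p), B_q μ₂(q)⟩|² = (1/P²)·⟨|μ₁|², |μ₂|²⟩_{L²(D), |S*𝟏|²} + ((P−1)/P²)·( ⟨|S*Sμ₁|², |μ₂|²⟩_{L²(D)} + ⟨|S*Sμ₂|², |μ₁|²⟩_{L²(D)} ) + ((P−1)²/P²)·|⟨Sμ₁, Sμ₂⟩|², where S*z : x ↦ Σ_g z_g e^{i⟨ω_g,x⟩}, 𝟏 is the all-ones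 vector in ℂ^m, and ⟨ν₁, ν₂⟩_{L²(D),K} = ∫∫ ν₁(x) ν₂(y) K(x−y) dx dy for a kernel K. -/
open MeasureTheory Complex
noncomputable section

/-- The adjoint map `S*z : x ↦ ∑_g z_g e^{i⟨ω_g,x⟩}`. -/
def Sstar {d : ℕ} (m : ℕ) (ω : Fin m → Fin d → ℝ) (z : Fin m → ℂ) (x : Fin d → ℝ) : ℂ :=
  ∑ g, z g * Complex.exp (Complex.I * (ip (ω g) x : ℂ))

def Efun {d : ℕ} (w : Fin d → ℝ) (x : Fin d → ℝ) : ℂ :=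
  Complex.exp (-Complex.I * (ip w x : ℂ))

lemma ip_sub {d : ℕ} (w x y : Fin d → ℝ) : ip w (x - y) = ip w x - ip w y := by
  simp [ip, mul_sub, Finset.sum_sub_distrib]

lemma measurable_ip {d : ℕ} (w : Fin d → ℝ) : Measurable fun x : Fin d → ℝ => ip w x := by
  unfold ip
  exact Finset.measurable_sum _ fun i _ => measurable_const.mul (measurable_pi_apply i)

lemma measurable_Efun {d : ℕ} (w : Fin d → ℝ) : Measurable (Efun w) := by
  unfold Efun
  exact Complex.continuous_exp.measurable.comp
    ((Complex.measurable_ofReal.comp (measurable_ip w)).const_mul (-Complex.I))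

lemma conj_Efun {d : ℕ} (w x : Fin d → ℝ) :
    (starRingEnd ℂ) (Efun w x) = Complex.exp (Complex.I * (ip w x : ℂ)) := by
  rw [Efun, ← Complex.exp_conj]
  congr 1
  simp [Complex.conj_ofReal]

lemma norm_Efun {d : ℕ} (w x : Fin d → ℝ) : ‖Efun w x‖ = 1 := by
  rw [Efun, Complex.norm_exp]
  simp

lemma Efun_sub {d : ℕ} (w x y : Fin d → ℝ) :
    Efun w (x - y) = Efun w x * (starRingEnd ℂ) (Efun w y) := by
  rw [conj_Efun, Efun, Efun, ← Complex.exp_add]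
  congr 1
  push_cast [ip_sub]
  ring

lemma sum_ite_diag {n : ℕ} (a b : ℂ) :
    (∑ r : Fin n, ∑ r' : Fin n, if r = r' then a else b)
      = (n : ℂ) * a + (n : ℂ) * ((n : ℂ) - 1) * b := by
  have h1 : ∀ r : Fin n, (∑ r' : Fin n, if r = r' then a else b) = (a - b) + n * b := by
    intro r
    calc (∑ r' : Fin n, if r = r' then a else b)
        = ∑ r' : Fin n, ((if r = r' then a - b else 0) + b) := by
          apply Finset.sum_congr rfl; intro r' _; split_ifs <;> ring
      _ = (a - b) + n * b := by
          rw [Finset.sum_add_distrib, Finset.sum_ite_eq]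
          simp [Finset.card_univ, mul_comm]
  simp only [h1, Finset.sum_const, Finset.card_univ, Fintype.card_fin, nsmul_eq_mul]
  ring

lemma pi_restrict {d : ℕ} (P : ℕ) (D : Set (Fin d → ℝ)) :
    Measure.pi (fun _ : Fin P => (volume : Measure (Fin d → ℝ)).restrict D)
      = (volume : Measure (Fin P → Fin d → ℝ)).restrict (Set.univ.pi fun _ => D) := by
  refine Measure.pi_eq fun s hs => ?_
  rw [Measure.restrict_apply (MeasurableSet.univ_pi hs)]
  rw [← Set.pi_inter_distrib]
  rw [volume_pi, Measure.pi_pi]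
  exact Finset.prod_congr rfl fun i _ => (Measure.restrict_apply (hs i)).symm

lemma integral_pi_prod {d P : ℕ} (D : Set (Fin d → ℝ)) (hD : MeasurableSet D)
    (f : Fin P → (Fin d → ℝ) → ℂ) :
    (∫ p : Fin P → Fin d → ℝ, ∏ i, f i (p i)
        ∂(Measure.pi fun _ : Fin P => volume.restrict D))
      = ∏ i, ∫ x in D, f i x := by
  rw [pi_restrict P D, ← integral_indicator (MeasurableSet.univ_pi fun _ => hD)]
  have h : (Set.univ.pi fun _ : Fin P => D).indicator (fun p => ∏ i, f i (p i))
      = fun p => ∏ i, D.indicator (f i) (p i) := by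
    funext p
    by_cases h : p ∈ Set.univ.pi fun _ : Fin P => D
    · rw [Set.indicator_of_mem h]
      exact Finset.prod_congr rfl fun i _ =>
        (Set.indicator_of_mem (h i (Set.mem_univ i)) _).symm
    · rw [Set.indicator_of_notMem h]
      simp only [Set.mem_pi, Set.mem_univ, true_implies] at h
      push_neg at h
      obtain ⟨i, hi⟩ := h
      exact (Finset.prod_eq_zero (Finset.mem_univ i)
        (Set.indicator_of_notMem hi _)).symm
  rw [h, volume_pi, MeasureTheory.integral_fintype_prod_eq_prod
    (fun _ x => D.indicator (f _) x)]
  exact Finset.prod_congr rfl fun i _ => integral_indicator hD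

lemma integral_pair2 {d P : ℕ} (D : Set (Fin d → ℝ)) (hD : MeasurableSet D)
    (hD1 : volume D = 1) (f g : (Fin d → ℝ) → ℂ) (r r' : Fin P) :
    (∫ p : Fin P → Fin d → ℝ, f (p r) * g (p r')
        ∂(Measure.pi fun _ : Fin P => volume.restrict D))
      = if r = r' then ∫ x in D, f x * g x
        else (∫ x in D, f x) * (∫ x in D, g x) := by
  have hone : (∫ _x in D, (1 : ℂ)) = 1 := by
    simp [setIntegral_const, hD1, Measure.real]
  have key : ∀ p : Fin P → Fin d → ℝ,
      f (p r) * g (p r')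
        = ∏ i, ((if i = r then f (p i) else 1) * (if i = r' then g (p i) else 1)) := by
    intro p
    rw [Finset.prod_mul_distrib, Finset.prod_ite_eq', Finset.prod_ite_eq']
    simp
  simp only [key]
  rw [integral_pi_prod D hD (fun i x => (if i = r then f x else 1) * (if i = r' then g x else 1))]
  by_cases h : r = r'
  · subst h
    rw [if_pos rfl]
    have h2 : ∀ i : Fin P,
        (∫ x in D, (if i = r then f x else 1) * (if i = r then g x else 1))
          = if i = r then ∫ x in D, f x * g x else 1 := by
      intro i; by_cases hi : i = r <;> simp [hi, hone]
    rw [Finset.prod_congr rfl fun i _ => h2 i, Finset.prod_ite_eq']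
    simp
  · rw [if_neg h]
    have h2 : ∀ i : Fin P,
        (∫ x in D, (if i = r then f x else 1) * (if i = r' then g x else 1))
          = (if i = r then ∫ x in D, f x else 1) * (if i = r' then ∫ x in D, g x else 1) := by
      intro i
      have h' : ¬ r' = r := fun hh => h hh.symm
      by_cases hi : i = r
      · by_cases hi' : i = r'
        · exact absurd (hi.symm.trans hi') h
        · simp [hi, hi', hone, h, h']
      · by_cases hi' : i = r' <;> simp [hi, hi', hone, h, h']
    rw [Finset.prod_congr rfl fun i _ => h2 i, Finset.prod_mul_distrib,
      Finset.prod_ite_eq', Finset.prod_ite_eq']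
    simp


/-- Central second-moment computation (equation proof_var5) in Lemma variance:
`E_{p,q}|⟨B_pμ₁(p),B_qμ₂(q)⟩|² = (1/P²)⟨|μ₁|²,|μ₂|²⟩_{L²,|S*𝟏|²}
 + ((P−1)/P²)(⟨|S*Sμ₁|²,|μ₂|²⟩ + ⟨|S*Sμ₂|²,|μ₁|²⟩) + ((P−1)²/P²)|⟨Sμ₁,Sμ₂⟩|²`. -/
theorem second_moment_bilinear_term
    (d P m : ℕ) (hP : 0 < P)
    (D : Set (Fin d → ℝ)) (hD : MeasurableSet D) (hD1 : volume D = 1)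
    (ω : Fin m → Fin d → ℝ)
    (μ₁ μ₂ : (Fin d → ℝ) → ℝ) (hm1 : Measurable μ₁) (hm2 : Measurable μ₂)
    (M : ℝ) (hb1 : ∀ x ∈ D, |μ₁ x| ≤ M) (hb2 : ∀ x ∈ D, |μ₂ x| ≤ M) :
    (∫ pq : (Fin P → (Fin d → ℝ)) × (Fin P → (Fin d → ℝ)),
        Complex.normSq
          (hinn (dsk m P ω (fun x => (μ₁ x : ℂ)) pq.1)
                (dsk m P ω (fun x => (μ₂ x : ℂ)) pq.2))
        ∂(Measure.prod
            (Measure.pi fun _ : Fin P => volume.restrict D)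
            (Measure.pi fun _ : Fin P => volume.restrict D)))
      = (1 / (P : ℝ) ^ 2) *
          (∫ x in D, ∫ y in D,
            (μ₁ x) ^ 2 * (μ₂ y) ^ 2 *
              Complex.normSq (Sstar m ω (fun _ => (1 : ℂ)) (x - y)))
        + (((P : ℝ) - 1) / (P : ℝ) ^ 2) *
          ((∫ x in D,
              Complex.normSq (Sstar m ω (sk m ω D (fun x => (μ₁ x : ℂ))) x) * (μ₂ x) ^ 2)
           + (∫ x in D,
              Complex.normSq (Sstar m ω (sk m ω D (fun x => (μ₂ x : ℂ))) x) * (μ₁ x) ^ 2))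
        + (((P : ℝ) - 1) ^ 2 / (P : ℝ) ^ 2) *
          Complex.normSq
            (hinn (sk m ω D (fun x => (μ₁ x : ℂ))) (sk m ω D (fun x => (μ₂ x : ℂ)))) := by
  haveI hprob : IsProbabilityMeasure ((volume : Measure (Fin d → ℝ)).restrict D) :=
    ⟨by rw [Measure.restrict_apply_univ]; exact hD1⟩
  set ν : Measure (Fin d → ℝ) := volume.restrict D with hν
  set π : Measure (Fin P → Fin d → ℝ) := Measure.pi fun _ => volume.restrict D with hπ
  haveI hπprob : IsProbabilityMeasure π := by rw [hπ]; exact Measure.pi.instIsProbabilityMeasure _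
  have hPne : (P : ℂ) ≠ 0 := Nat.cast_ne_zero.mpr hP.ne'
  -- basic objects
  set f₁ : Fin m → (Fin d → ℝ) → ℂ := fun l x => Efun (ω l) x * (μ₁ x : ℂ) with hf₁
  set f₂ : Fin m → (Fin d → ℝ) → ℂ := fun l x => Efun (ω l) x * (μ₂ x : ℂ) with hf₂
  set S₁ : Fin m → ℂ := sk m ω D (fun x => (μ₁ x : ℂ)) with hS₁
  set S₂ : Fin m → ℂ := sk m ω D (fun x => (μ₂ x : ℂ)) with hS₂
  have hS₁d : ∀ l, S₁ l = ∫ x in D, f₁ l x := fun l => rfl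
  have hS₂d : ∀ l, S₂ l = ∫ x in D, f₂ l x := fun l => rfl
  set A : Fin m → Fin m → ℂ := fun l l' => ∫ x in D, f₁ l x * (starRingEnd ℂ) (f₁ l' x) with hA
  set B : Fin m → Fin m → ℂ := fun l l' => ∫ y in D, (starRingEnd ℂ) (f₂ l y) * f₂ l' y with hB
  have hmf₁ : ∀ l, Measurable (f₁ l) := fun l =>
    (measurable_Efun _).mul (Complex.measurable_ofReal.comp hm1)
  have hmf₂ : ∀ l, Measurable (f₂ l) := fun l =>
    (measurable_Efun _).mul (Complex.measurable_ofReal.comp hm2)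
  have hbf₁ : ∀ l, ∀ x ∈ D, ‖f₁ l x‖ ≤ M := by
    intro l x hx
    rw [hf₁]
    simp only [norm_mul, norm_Efun, one_mul, Complex.norm_real, Real.norm_eq_abs]
    exact hb1 x hx
  have hbf₂ : ∀ l, ∀ x ∈ D, ‖f₂ l x‖ ≤ M := by
    intro l x hx
    rw [hf₂]
    simp only [norm_mul, norm_Efun, one_mul, Complex.norm_real, Real.norm_eq_abs]
    exact hb2 x hx
  have intD : ∀ (f : (Fin d → ℝ) → ℂ) (C : ℝ), Measurable f → (∀ x ∈ D, ‖f x‖ ≤ C) →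
      Integrable f ν := fun f C hf hC =>
    (integrable_const C).mono' hf.aestronglyMeasurable
      ((ae_restrict_mem hD).mono fun x hx => hC x hx)
  have haeπ : ∀ᵐ p ∂π, ∀ i, p i ∈ D := by
    rw [hπ, pi_restrict]
    filter_upwards [ae_restrict_mem (MeasurableSet.univ_pi fun _ : Fin P => hD)] with p hp i
    exact hp i (Set.mem_univ i)
  have hM0 : 0 ≤ M := by
    obtain ⟨x, hx⟩ : D.Nonempty :=
      nonempty_of_measure_ne_zero (by rw [hD1]; exact one_ne_zero)
    exact (abs_nonneg _).trans (hb1 x hx)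
  -- dsk basic facts
  have hdsk₁ : ∀ (l : Fin m) (p : Fin P → Fin d → ℝ),
      dsk m P ω (fun x => (μ₁ x : ℂ)) p l = (∑ r, f₁ l (p r)) / (P : ℂ) := fun l p => rfl
  have hdsk₂ : ∀ (l : Fin m) (q : Fin P → Fin d → ℝ),
      dsk m P ω (fun x => (μ₂ x : ℂ)) q l = (∑ r, f₂ l (q r)) / (P : ℂ) := fun l q => rfl
  have hdskm₁ : ∀ l, Measurable
      (fun p : Fin P → Fin d → ℝ => dsk m P ω (fun x => (μ₁ x : ℂ)) p l) := by
    intro l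
    simp only [hdsk₁]
    exact (Finset.measurable_sum _ fun r _ => (hmf₁ l).comp (measurable_pi_apply r)).div_const _
  have hdskm₂ : ∀ l, Measurable
      (fun q : Fin P → Fin d → ℝ => dsk m P ω (fun x => (μ₂ x : ℂ)) q l) := by
    intro l
    simp only [hdsk₂]
    exact (Finset.measurable_sum _ fun r _ => (hmf₂ l).comp (measurable_pi_apply r)).div_const _
  have hdskbd : ∀ (f : Fin m → (Fin d → ℝ) → ℂ), (∀ l, ∀ x ∈ D, ‖f l x‖ ≤ M) →
      ∀ (l : Fin m) (p : Fin P → Fin d → ℝ), (∀ i, p i ∈ D) →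
      ‖(∑ r : Fin P, f l (p r)) / (P : ℂ)‖ ≤ M := by
    intro f hbf l p hp
    rw [norm_div]
    have h1 : ‖∑ r : Fin P, f l (p r)‖ ≤ (P : ℝ) * M := by
      refine (norm_sum_le _ _).trans ?_
      calc ∑ r : Fin P, ‖f l (p r)‖ ≤ ∑ _r : Fin P, M :=
            Finset.sum_le_sum fun r _ => hbf l _ (hp r)
        _ = (P : ℝ) * M := by simp [mul_comm]
    have hPpos : (0 : ℝ) < P := Nat.cast_pos.mpr hP
    rw [Complex.norm_natCast, div_le_iff₀ hPpos]
    linarith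
  set g₁ : Fin m → Fin m → (Fin P → Fin d → ℝ) → ℂ := fun l l' p =>
    dsk m P ω (fun x => (μ₁ x : ℂ)) p l *
      (starRingEnd ℂ) (dsk m P ω (fun x => (μ₁ x : ℂ)) p l') with hg₁
  set g₂ : Fin m → Fin m → (Fin P → Fin d → ℝ) → ℂ := fun l l' q =>
    (starRingEnd ℂ) (dsk m P ω (fun x => (μ₂ x : ℂ)) q l) *
      dsk m P ω (fun x => (μ₂ x : ℂ)) q l' with hg₂
  have hg₁int : ∀ l l', Integrable (g₁ l l') π := by
    intro l l'
    refine (integrable_const (M * M)).mono' ?_ ?_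
    · exact ((hdskm₁ l).mul (RCLike.continuous_conj.measurable.comp (hdskm₁ l'))).aestronglyMeasurable
    · filter_upwards [haeπ] with p hp
      rw [hg₁]
      simp only [norm_mul, RCLike.norm_conj]
      exact mul_le_mul (hdskbd f₁ hbf₁ l p hp) (hdskbd f₁ hbf₁ l' p hp) (norm_nonneg _) hM0
  have hg₂int : ∀ l l', Integrable (g₂ l l') π := by
    intro l l'
    refine (integrable_const (M * M)).mono' ?_ ?_
    · exact ((RCLike.continuous_conj.measurable.comp (hdskm₂ l)).mul (hdskm₂ l')).aestronglyMeasurable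
    · filter_upwards [haeπ] with q hq
      rw [hg₂]
      simp only [norm_mul, RCLike.norm_conj]
      exact mul_le_mul (hdskbd f₂ hbf₂ l q hq) (hdskbd f₂ hbf₂ l' q hq) (norm_nonneg _) hM0
  have hpoint : ∀ pq : (Fin P → (Fin d → ℝ)) × (Fin P → (Fin d → ℝ)),
      ((Complex.normSq (hinn (dsk m P ω (fun x => (μ₁ x : ℂ)) pq.1)
          (dsk m P ω (fun x => (μ₂ x : ℂ)) pq.2)) : ℝ) : ℂ)
        = ∑ l, ∑ l', g₁ l l' pq.1 * g₂ l l' pq.2 := by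
    intro pq
    rw [← Complex.mul_conj]
    simp only [hinn, map_sum, map_mul, Complex.conj_conj, Finset.sum_mul_sum, hg₁, hg₂]
    exact Finset.sum_congr rfl fun l _ => Finset.sum_congr rfl fun l' _ => by ring
  have hmain : (∫ pq : (Fin P → (Fin d → ℝ)) × (Fin P → (Fin d → ℝ)),
        ((Complex.normSq (hinn (dsk m P ω (fun x => (μ₁ x : ℂ)) pq.1)
          (dsk m P ω (fun x => (μ₂ x : ℂ)) pq.2)) : ℝ) : ℂ) ∂(π.prod π))
      = ∑ l, ∑ l', (∫ p, g₁ l l' p ∂π) * (∫ q, g₂ l l' q ∂π) := by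
    simp only [hpoint]
    rw [integral_finset_sum _ fun l _ =>
      integrable_finset_sum _ fun l' _ => (hg₁int l l').mul_prod (hg₂int l l')]
    refine Finset.sum_congr rfl fun l _ => ?_
    rw [integral_finset_sum _ fun l' _ => (hg₁int l l').mul_prod (hg₂int l l')]
    exact Finset.sum_congr rfl fun l' _ => integral_prod_mul _ _
  have hint₁ : ∀ (l l' : Fin m) (r r' : Fin P), Integrable
      (fun p : Fin P → Fin d → ℝ => f₁ l (p r) * (starRingEnd ℂ) (f₁ l' (p r'))) π := by
    intro l l' r r'
    refine (integrable_const (M * M)).mono' ?_ ?_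
    · exact (((hmf₁ l).comp (measurable_pi_apply r)).mul
        (RCLike.continuous_conj.measurable.comp
          ((hmf₁ l').comp (measurable_pi_apply r')))).aestronglyMeasurable
    · filter_upwards [haeπ] with p hp
      simp only [norm_mul, RCLike.norm_conj]
      exact mul_le_mul (hbf₁ l _ (hp r)) (hbf₁ l' _ (hp r')) (norm_nonneg _) hM0
  have hint₂ : ∀ (l l' : Fin m) (s s' : Fin P), Integrable
      (fun q : Fin P → Fin d → ℝ => (starRingEnd ℂ) (f₂ l (q s)) * f₂ l' (q s')) π := by
    intro l l' s s'
    refine (integrable_const (M * M)).mono' ?_ ?_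
    · exact ((RCLike.continuous_conj.measurable.comp
        ((hmf₂ l).comp (measurable_pi_apply s))).mul
        ((hmf₂ l').comp (measurable_pi_apply s'))).aestronglyMeasurable
    · filter_upwards [haeπ] with q hq
      simp only [norm_mul, RCLike.norm_conj]
      exact mul_le_mul (hbf₂ l _ (hq s)) (hbf₂ l' _ (hq s')) (norm_nonneg _) hM0
  have hIg₁ : ∀ l l', (∫ p, g₁ l l' p ∂π)
      = ((P : ℂ) * A l l' + (P : ℂ) * ((P : ℂ) - 1) * (S₁ l * (starRingEnd ℂ) (S₁ l')))
          / ((P : ℂ) * (P : ℂ)) := by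
    intro l l'
    have hpt : ∀ p : Fin P → Fin d → ℝ, g₁ l l' p
        = (∑ r : Fin P, ∑ r' : Fin P, f₁ l (p r) * (starRingEnd ℂ) (f₁ l' (p r')))
            / ((P : ℂ) * (P : ℂ)) := by
      intro p
      simp only [hg₁]
      rw [hdsk₁, hdsk₁, map_div₀, map_natCast, map_sum, div_mul_div_comm,
        Finset.sum_mul_sum]
    simp only [hpt]
    rw [integral_div]
    congr 1
    rw [integral_finset_sum _ fun r _ => integrable_finset_sum _ fun r' _ => hint₁ l l' r r']
    have hrow : ∀ r : Fin P,
        (∫ p, ∑ r' : Fin P, f₁ l (p r) * (starRingEnd ℂ) (f₁ l' (p r')) ∂π)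
          = ∑ r' : Fin P, if r = r' then A l l' else S₁ l * (starRingEnd ℂ) (S₁ l') := by
      intro r
      rw [integral_finset_sum _ fun r' _ => hint₁ l l' r r']
      refine Finset.sum_congr rfl fun r' _ => ?_
      rw [hπ, integral_pair2 D hD hD1 (f₁ l) (fun x => (starRingEnd ℂ) (f₁ l' x)) r r']
      by_cases h : r = r'
      · rw [if_pos h, if_pos h, hA]
      · rw [if_neg h, if_neg h, integral_conj, ← hS₁d, ← hS₁d]
    rw [Finset.sum_congr rfl fun r _ => hrow r, sum_ite_diag]
  have hIg₂ : ∀ l l', (∫ q, g₂ l l' q ∂π)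
      = ((P : ℂ) * B l l' + (P : ℂ) * ((P : ℂ) - 1) * ((starRingEnd ℂ) (S₂ l) * S₂ l'))
          / ((P : ℂ) * (P : ℂ)) := by
    intro l l'
    have hpt : ∀ q : Fin P → Fin d → ℝ, g₂ l l' q
        = (∑ s : Fin P, ∑ s' : Fin P, (starRingEnd ℂ) (f₂ l (q s)) * f₂ l' (q s'))
            / ((P : ℂ) * (P : ℂ)) := by
      intro q
      simp only [hg₂]
      rw [hdsk₂, hdsk₂, map_div₀, map_natCast, map_sum, div_mul_div_comm,
        Finset.sum_mul_sum]
    simp only [hpt]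
    rw [integral_div]
    congr 1
    rw [integral_finset_sum _ fun s _ => integrable_finset_sum _ fun s' _ => hint₂ l l' s s']
    have hrow : ∀ s : Fin P,
        (∫ q, ∑ s' : Fin P, (starRingEnd ℂ) (f₂ l (q s)) * f₂ l' (q s') ∂π)
          = ∑ s' : Fin P, if s = s' then B l l' else (starRingEnd ℂ) (S₂ l) * S₂ l' := by
      intro s
      rw [integral_finset_sum _ fun s' _ => hint₂ l l' s s']
      refine Finset.sum_congr rfl fun s' _ => ?_
      rw [hπ, integral_pair2 D hD hD1 (fun x => (starRingEnd ℂ) (f₂ l x)) (f₂ l') s s']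
      by_cases h : s = s'
      · rw [if_pos h, if_pos h, hB]
      · rw [if_neg h, if_neg h, integral_conj, ← hS₂d, ← hS₂d]
    rw [Finset.sum_congr rfl fun s _ => hrow s, sum_ite_diag]
  -- integrability on ν
  have hαint : ∀ l l', Integrable (fun x => f₁ l x * (starRingEnd ℂ) (f₁ l' x)) ν :=
    fun l l' => intD _ (M * M)
      ((hmf₁ l).mul (RCLike.continuous_conj.measurable.comp (hmf₁ l')))
      (fun x hx => by
        simp only [norm_mul, RCLike.norm_conj]
        exact mul_le_mul (hbf₁ l x hx) (hbf₁ l' x hx) (norm_nonneg _) hM0)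
  have hβint : ∀ l l', Integrable (fun y => (starRingEnd ℂ) (f₂ l y) * f₂ l' y) ν :=
    fun l l' => intD _ (M * M)
      ((RCLike.continuous_conj.measurable.comp (hmf₂ l)).mul (hmf₂ l'))
      (fun x hx => by
        simp only [norm_mul, RCLike.norm_conj]
        exact mul_le_mul (hbf₂ l x hx) (hbf₂ l' x hx) (norm_nonneg _) hM0)
  -- pointwise identities
  have hnS : ∀ z : ℂ, ((Complex.normSq z : ℝ) : ℂ) = (starRingEnd ℂ) z * z := fun z => by
    rw [← Complex.mul_conj]; ring
  have hnS' : ∀ z : ℂ, ((Complex.normSq z : ℝ) : ℂ) = z * (starRingEnd ℂ) z := fun z =>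
    (Complex.mul_conj z).symm
  have hpt1 : ∀ x y : Fin d → ℝ,
      (∑ l, ∑ l', (f₁ l x * (starRingEnd ℂ) (f₁ l' x)) * ((starRingEnd ℂ) (f₂ l y) * f₂ l' y))
        = ((μ₁ x ^ 2 * μ₂ y ^ 2 * Complex.normSq (Sstar m ω (fun _ => (1 : ℂ)) (x - y)) : ℝ) : ℂ) := by
    intro x y
    have hS : Sstar m ω (fun _ => (1 : ℂ)) (x - y)
        = ∑ g, (starRingEnd ℂ) (Efun (ω g) x) * Efun (ω g) y := by
      simp only [Sstar, one_mul, ← conj_Efun, Efun_sub, map_mul, Complex.conj_conj]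
    rw [Complex.ofReal_mul, Complex.ofReal_mul, hnS, hS, map_sum]
    simp only [map_mul, Complex.conj_conj]
    rw [Finset.sum_mul_sum, Finset.mul_sum]
    simp only [Finset.mul_sum]
    refine Finset.sum_congr rfl fun l _ => Finset.sum_congr rfl fun l' _ => ?_
    simp only [hf₁, hf₂, map_mul, Complex.conj_ofReal]
    push_cast
    ring
  have hpt2 : ∀ y : Fin d → ℝ,
      (∑ l, ∑ l', (S₁ l * (starRingEnd ℂ) (S₁ l')) * ((starRingEnd ℂ) (f₂ l y) * f₂ l' y))
        = ((Complex.normSq (Sstar m ω S₁ y) * μ₂ y ^ 2 : ℝ) : ℂ) := by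
    intro y
    have hS : Sstar m ω S₁ y = ∑ g, S₁ g * (starRingEnd ℂ) (Efun (ω g) y) := by
      simp only [Sstar, ← conj_Efun]
    rw [Complex.ofReal_mul, hnS', hS, map_sum]
    simp only [map_mul, Complex.conj_conj]
    rw [Finset.sum_mul_sum, Finset.sum_mul]
    simp only [Finset.sum_mul]
    refine Finset.sum_congr rfl fun l _ => Finset.sum_congr rfl fun l' _ => ?_
    simp only [hf₂, map_mul, Complex.conj_ofReal]
    push_cast
    ring
  have hpt3 : ∀ x : Fin d → ℝ,
      (∑ l, ∑ l', (f₁ l x * (starRingEnd ℂ) (f₁ l' x)) * ((starRingEnd ℂ) (S₂ l) * S₂ l'))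
        = ((Complex.normSq (Sstar m ω S₂ x) * μ₁ x ^ 2 : ℝ) : ℂ) := by
    intro x
    have hS : Sstar m ω S₂ x = ∑ g, S₂ g * (starRingEnd ℂ) (Efun (ω g) x) := by
      simp only [Sstar, ← conj_Efun]
    rw [Complex.ofReal_mul, hnS, hS, map_sum]
    simp only [map_mul, Complex.conj_conj]
    rw [Finset.sum_mul_sum, Finset.sum_mul]
    simp only [Finset.sum_mul]
    refine Finset.sum_congr rfl fun l _ => Finset.sum_congr rfl fun l' _ => ?_
    simp only [hf₁, map_mul, Complex.conj_ofReal]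
    push_cast
    ring
  have hUV : (∑ l, ∑ l',
        (S₁ l * (starRingEnd ℂ) (S₁ l')) * ((starRingEnd ℂ) (S₂ l) * S₂ l'))
      = ((Complex.normSq (hinn S₁ S₂) : ℝ) : ℂ) := by
    rw [← Complex.mul_conj]
    simp only [hinn, map_sum, map_mul, Complex.conj_conj, Finset.sum_mul_sum]
    exact Finset.sum_congr rfl fun l _ => Finset.sum_congr rfl fun l' _ => by ring
  -- the three integral identifications
  have hAB : (∑ l, ∑ l', A l l' * B l l')
      = ((∫ x in D, ∫ y in D,
          μ₁ x ^ 2 * μ₂ y ^ 2 * Complex.normSq (Sstar m ω (fun _ => (1 : ℂ)) (x - y)) : ℝ) : ℂ) := by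
    calc (∑ l, ∑ l', A l l' * B l l')
        = ∑ l, ∑ l', ∫ x in D, (f₁ l x * (starRingEnd ℂ) (f₁ l' x)) * B l l' := by
          exact Finset.sum_congr rfl fun l _ => Finset.sum_congr rfl fun l' _ =>
            (integral_mul_const _ _).symm
      _ = ∫ x in D, ∑ l, ∑ l', (f₁ l x * (starRingEnd ℂ) (f₁ l' x)) * B l l' := by
          rw [integral_finset_sum _ fun l _ =>
            integrable_finset_sum _ fun l' _ => (hαint l l').mul_const _]
          exact Finset.sum_congr rfl fun l _ =>
            (integral_finset_sum _ fun l' _ => (hαint l l').mul_const _).symm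
      _ = ∫ x in D, ((∫ y in D,
            μ₁ x ^ 2 * μ₂ y ^ 2 * Complex.normSq (Sstar m ω (fun _ => (1 : ℂ)) (x - y)) : ℝ) : ℂ) := by
          refine integral_congr_ae (Filter.Eventually.of_forall fun x => ?_)
          calc (∑ l, ∑ l', (f₁ l x * (starRingEnd ℂ) (f₁ l' x)) * B l l')
              = ∑ l, ∑ l', ∫ y in D,
                  (f₁ l x * (starRingEnd ℂ) (f₁ l' x)) * ((starRingEnd ℂ) (f₂ l y) * f₂ l' y) := by
                exact Finset.sum_congr rfl fun l _ => Finset.sum_congr rfl fun l' _ =>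
                  (integral_const_mul _ _).symm
            _ = ∫ y in D, ∑ l, ∑ l',
                  (f₁ l x * (starRingEnd ℂ) (f₁ l' x)) * ((starRingEnd ℂ) (f₂ l y) * f₂ l' y) := by
                rw [integral_finset_sum _ fun l _ =>
                  integrable_finset_sum _ fun l' _ => (hβint l l').const_mul _]
                exact Finset.sum_congr rfl fun l _ =>
                  (integral_finset_sum _ fun l' _ => (hβint l l').const_mul _).symm
            _ = ∫ y in D, ((μ₁ x ^ 2 * μ₂ y ^ 2 *
                  Complex.normSq (Sstar m ω (fun _ => (1 : ℂ)) (x - y)) : ℝ) : ℂ) := by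
                exact integral_congr_ae (Filter.Eventually.of_forall fun y => hpt1 x y)
            _ = _ := integral_ofReal
      _ = _ := integral_ofReal
  have hBU : (∑ l, ∑ l', (S₁ l * (starRingEnd ℂ) (S₁ l')) * B l l')
      = ((∫ y in D, Complex.normSq (Sstar m ω S₁ y) * μ₂ y ^ 2 : ℝ) : ℂ) := by
    calc (∑ l, ∑ l', (S₁ l * (starRingEnd ℂ) (S₁ l')) * B l l')
        = ∑ l, ∑ l', ∫ y in D,
            (S₁ l * (starRingEnd ℂ) (S₁ l')) * ((starRingEnd ℂ) (f₂ l y) * f₂ l' y) := by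
          exact Finset.sum_congr rfl fun l _ => Finset.sum_congr rfl fun l' _ =>
            (integral_const_mul _ _).symm
      _ = ∫ y in D, ∑ l, ∑ l',
            (S₁ l * (starRingEnd ℂ) (S₁ l')) * ((starRingEnd ℂ) (f₂ l y) * f₂ l' y) := by
          rw [integral_finset_sum _ fun l _ =>
            integrable_finset_sum _ fun l' _ => (hβint l l').const_mul _]
          exact Finset.sum_congr rfl fun l _ =>
            (integral_finset_sum _ fun l' _ => (hβint l l').const_mul _).symm
      _ = ∫ y in D, ((Complex.normSq (Sstar m ω S₁ y) * μ₂ y ^ 2 : ℝ) : ℂ) :=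
          integral_congr_ae (Filter.Eventually.of_forall fun y => hpt2 y)
      _ = _ := integral_ofReal
  have hAV : (∑ l, ∑ l', A l l' * ((starRingEnd ℂ) (S₂ l) * S₂ l'))
      = ((∫ x in D, Complex.normSq (Sstar m ω S₂ x) * μ₁ x ^ 2 : ℝ) : ℂ) := by
    calc (∑ l, ∑ l', A l l' * ((starRingEnd ℂ) (S₂ l) * S₂ l'))
        = ∑ l, ∑ l', ∫ x in D,
            (f₁ l x * (starRingEnd ℂ) (f₁ l' x)) * ((starRingEnd ℂ) (S₂ l) * S₂ l') := by
          exact Finset.sum_congr rfl fun l _ => Finset.sum_congr rfl fun l' _ =>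
            (integral_mul_const _ _).symm
      _ = ∫ x in D, ∑ l, ∑ l',
            (f₁ l x * (starRingEnd ℂ) (f₁ l' x)) * ((starRingEnd ℂ) (S₂ l) * S₂ l') := by
          rw [integral_finset_sum _ fun l _ =>
            integrable_finset_sum _ fun l' _ => (hαint l l').mul_const _]
          exact Finset.sum_congr rfl fun l _ =>
            (integral_finset_sum _ fun l' _ => (hαint l l').mul_const _).symm
      _ = ∫ x in D, ((Complex.normSq (Sstar m ω S₂ x) * μ₁ x ^ 2 : ℝ) : ℂ) :=
          integral_congr_ae (Filter.Eventually.of_forall fun x => hpt3 x)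
      _ = _ := integral_ofReal
  -- expand products of the two computed integrals
  have hexp : ∀ l l', (∫ p, g₁ l l' p ∂π) * (∫ q, g₂ l l' q ∂π)
      = (1 / (P : ℂ) ^ 2) * (A l l' * B l l')
        + (((P : ℂ) - 1) / (P : ℂ) ^ 2) * (A l l' * ((starRingEnd ℂ) (S₂ l) * S₂ l'))
        + (((P : ℂ) - 1) / (P : ℂ) ^ 2) * ((S₁ l * (starRingEnd ℂ) (S₁ l')) * B l l')
        + (((P : ℂ) - 1) ^ 2 / (P : ℂ) ^ 2) *
            ((S₁ l * (starRingEnd ℂ) (S₁ l')) * ((starRingEnd ℂ) (S₂ l) * S₂ l')) := by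
    intro l l'
    rw [hIg₁, hIg₂]
    field_simp
    ring
  have hfin : (∫ pq : (Fin P → (Fin d → ℝ)) × (Fin P → (Fin d → ℝ)),
        ((Complex.normSq (hinn (dsk m P ω (fun x => (μ₁ x : ℂ)) pq.1)
          (dsk m P ω (fun x => (μ₂ x : ℂ)) pq.2)) : ℝ) : ℂ) ∂(π.prod π))
      = (1 / (P : ℂ) ^ 2) * (∑ l, ∑ l', A l l' * B l l')
        + (((P : ℂ) - 1) / (P : ℂ) ^ 2) * (∑ l, ∑ l', A l l' * ((starRingEnd ℂ) (S₂ l) * S₂ l'))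
        + (((P : ℂ) - 1) / (P : ℂ) ^ 2) * (∑ l, ∑ l', (S₁ l * (starRingEnd ℂ) (S₁ l')) * B l l')
        + (((P : ℂ) - 1) ^ 2 / (P : ℂ) ^ 2) * (∑ l, ∑ l',
            (S₁ l * (starRingEnd ℂ) (S₁ l')) * ((starRingEnd ℂ) (S₂ l) * S₂ l')) := by
    rw [hmain]
    simp only [hexp, Finset.sum_add_distrib, ← Finset.mul_sum]
  -- conclude
  apply Complex.ofReal_injective
  calc ((∫ pq : (Fin P → (Fin d → ℝ)) × (Fin P → (Fin d → ℝ)),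
        Complex.normSq (hinn (dsk m P ω (fun x => (μ₁ x : ℂ)) pq.1)
          (dsk m P ω (fun x => (μ₂ x : ℂ)) pq.2)) ∂(π.prod π) : ℝ) : ℂ)
      = ∫ pq : (Fin P → (Fin d → ℝ)) × (Fin P → (Fin d → ℝ)),
          ((Complex.normSq (hinn (dsk m P ω (fun x => (μ₁ x : ℂ)) pq.1)
            (dsk m P ω (fun x => (μ₂ x : ℂ)) pq.2)) : ℝ) : ℂ) ∂(π.prod π) :=
        integral_ofReal.symm
    _ = _ := hfin
    _ = _ := by
        rw [hAB, hBU, hAV, hUV]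
        push_cast
        ring
end
end
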